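/- Let i ∈ 𝔽₉ satisfy i² = −1, and define the matrices h₁ = [[0,1],[−1,−1]], h₂ = [[0,−1],[1,−1]], h₃ = [[−1,i],[i,0]], h₄ = [[−1,−i],[−i,0]] in SL₂(𝔽₉). Then each h_k has order 3, for all k ≠ l the element (h_k·h_l)² equals the central involution −1 (in particular all (h_k h_l)², k ≠ l, are equal), and ⟨h₁, h₂, h₃, h₄⟩ = SL₂(𝔽₉). (These are Moore's defining relations for the Schur double cover 2·A₆ ≅ SL₂(9).) -/

import Mathlib

section MooreAux

variable {F : Type*} [Field F]

private lemma zmod3_cube (w : ZMod 3) : w ^ 3 = w := by revert w; decide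

private lemma mext (a b c d a' b' c' d' : F) (e1 : a = a') (e2 : b = b')
    (e3 : c = c') (e4 : d = d') :
    !![a, b; c, d] = !![a', b'; c', d'] := by rw [e1, e2, e3, e4]

private lemma mneg_one : (-1 : Matrix (Fin 2) (Fin 2) F) = !![-1, 0; 0, -1] := by
  ext p q; fin_cases p <;> fin_cases q <;> simp [Matrix.one_apply]

/-- upper unipotent -/
def TU (t : F) : Matrix.SpecialLinearGroup (Fin 2) F :=
  ⟨!![1, t; 0, 1], by simp [Matrix.det_fin_two_of]⟩

/-- lower unipotent -/
def TL (t : F) : Matrix.SpecialLinearGroup (Fin 2) F :=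
  ⟨!![1, 0; t, 1], by simp [Matrix.det_fin_two_of]⟩

lemma TU_coe (t : F) : (TU t : Matrix (Fin 2) (Fin 2) F) = !![1, t; 0, 1] := rfl

lemma TL_coe (t : F) : (TL t : Matrix (Fin 2) (Fin 2) F) = !![1, 0; t, 1] := rfl

lemma TU_mul (x y : F) : TU x * TU y = TU (x + y) := by
  apply Subtype.ext
  rw [Matrix.SpecialLinearGroup.coe_mul, TU_coe, TU_coe, TU_coe]
  simp only [Matrix.mul_fin_two]
  exact mext _ _ _ _ _ _ _ _ (by ring) (by ring) (by ring) (by ring)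

lemma TL_mul (x y : F) : TL x * TL y = TL (x + y) := by
  apply Subtype.ext
  rw [Matrix.SpecialLinearGroup.coe_mul, TL_coe, TL_coe, TL_coe]
  simp only [Matrix.mul_fin_two]
  exact mext _ _ _ _ _ _ _ _ (by ring) (by ring) (by ring) (by ring)

lemma TU_pow (t : F) (n : ℕ) : (TU t) ^ n = TU ((n : F) * t) := by
  induction n with
  | zero =>
    apply Subtype.ext
    rw [pow_zero, Matrix.SpecialLinearGroup.coe_one, Matrix.one_fin_two, TU_coe]
    exact mext _ _ _ _ _ _ _ _ (by ring) (by push_cast; ring) (by ring) (by ring)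
  | succ n ih =>
    rw [pow_succ, ih, TU_mul]
    congr 1
    push_cast; ring

lemma TL_pow (t : F) (n : ℕ) : (TL t) ^ n = TL ((n : F) * t) := by
  induction n with
  | zero =>
    apply Subtype.ext
    rw [pow_zero, Matrix.SpecialLinearGroup.coe_one, Matrix.one_fin_two, TL_coe]
    exact mext _ _ _ _ _ _ _ _ (by ring) (by ring) (by push_cast; ring) (by ring)
  | succ n ih =>
    rw [pow_succ, ih, TL_mul]
    congr 1
    push_cast; ring

lemma three_eq_zero [Fintype F] (hF : Fintype.card F = 9) : (3 : F) = 0 := by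
  have h9 : ((9 : ℕ) : F) = 0 := by rw [← hF]; exact Nat.cast_card_eq_zero F
  have h99 : (3 : F) * 3 = 0 := by
    have : ((9 : ℕ) : F) = (3 : F) * 3 := by push_cast; ring
    rw [← this, h9]
  rcases mul_eq_zero.mp h99 with h | h <;> exact h

/-- every element of a field with 9 elements containing `i` with `i ^ 2 = -1`
is `a + b * i` with natural `a`, `b`. -/
lemma decomp_F9 [Fintype F] (hF : Fintype.card F = 9) (i : F) (hi : i ^ 2 = -1) :
    ∀ t : F, ∃ a b : ℕ, t = (a : F) + (b : F) * i := by
  have h3F : (3 : F) = 0 := three_eq_zero hF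
  haveI : Fact (Nat.Prime 3) := ⟨Nat.prime_three⟩
  haveI : CharP F 3 := (CharP.charP_iff_prime_eq_zero Nat.prime_three).mpr h3F
  set φ : ZMod 3 →+* F := ZMod.castHom (dvd_refl 3) F with hφ
  have φinj : Function.Injective φ := φ.injective
  have hrange : ∀ z : ZMod 3, i ≠ φ z := by
    intro z hz
    have h3 : i ^ 3 = i := by
      rw [hz, ← map_pow, zmod3_cube]
    have e : -i = i := by linear_combination h3 - i * hi
    have e0 : i = 0 := by linear_combination i * h3F + e
    rw [e0] at hi
    norm_num at hi
  have ψinj : Function.Injective (fun p : ZMod 3 × ZMod 3 => φ p.1 + φ p.2 * i) := by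
    rintro ⟨a, b⟩ ⟨c, d⟩ hpq
    simp only at hpq
    by_cases hbd : b = d
    · subst hbd
      have : φ a = φ c := by linear_combination hpq
      exact Prod.ext (φinj this) rfl
    · exfalso
      apply hrange ((a - c) * (d - b)⁻¹)
      have hdb : φ d - φ b ≠ 0 := by
        rw [← map_sub]
        intro e
        exact hbd (sub_eq_zero.mp (φinj (by rw [e, map_zero]))).symm
      rw [map_mul, map_sub, map_inv₀, map_sub]
      field_simp
      linear_combination -hpq
  have ψsurj : Function.Surjective (fun p : ZMod 3 × ZMod 3 => φ p.1 + φ p.2 * i) := by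
    have hcard : Fintype.card (ZMod 3 × ZMod 3) = Fintype.card F := by
      simp [hF, ZMod.card]
    exact ((Fintype.bijective_iff_injective_and_card _).mpr ⟨ψinj, hcard⟩).2
  intro t
  obtain ⟨⟨a, b⟩, hab⟩ := ψsurj t
  refine ⟨a.val, b.val, ?_⟩
  rw [← hab]
  simp only [hφ, ZMod.natCast_val, ZMod.castHom_apply]

lemma SL2_mem_aux {G : Subgroup (Matrix.SpecialLinearGroup (Fin 2) F)}
    (hTU : ∀ t : F, TU t ∈ G) (hTL : ∀ t : F, TL t ∈ G)
    (g : Matrix.SpecialLinearGroup (Fin 2) F)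
    (hc : (g : Matrix (Fin 2) (Fin 2) F) 1 0 ≠ 0) : g ∈ G := by
  set A : Matrix (Fin 2) (Fin 2) F := (g : Matrix (Fin 2) (Fin 2) F) with hA
  have hdet : A 0 0 * A 1 1 - A 0 1 * A 1 0 = 1 := by
    rw [← Matrix.det_fin_two]
    exact g.2
  have hg : g = TU ((A 0 0 - 1) * (A 1 0)⁻¹) *
      (TL (A 1 0) * TU ((A 1 1 - 1) * (A 1 0)⁻¹)) := by
    apply Subtype.ext
    rw [Matrix.SpecialLinearGroup.coe_mul, Matrix.SpecialLinearGroup.coe_mul,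
      TU_coe, TL_coe, TU_coe, ← hA, Matrix.eta_fin_two A]
    simp only [Matrix.mul_fin_two]
    refine mext _ _ _ _ _ _ _ _ ?_ ?_ ?_ ?_
    all_goals simp only [Matrix.of_apply, Matrix.cons_val', Matrix.cons_val_zero, Matrix.cons_val_one, Matrix.empty_val', Matrix.cons_val_fin_one, Matrix.head_cons]
    · field_simp
      ring
    · field_simp
      linear_combination -hdet
    · field_simp
      ring
    · field_simp
      ring
  rw [hg]
  exact mul_mem (hTU _) (mul_mem (hTL _) (hTU _))

lemma SL2_mem_of_transvections {G : Subgroup (Matrix.SpecialLinearGroup (Fin 2) F)}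
    (hTU : ∀ t : F, TU t ∈ G) (hTL : ∀ t : F, TL t ∈ G)
    (g : Matrix.SpecialLinearGroup (Fin 2) F) : g ∈ G := by
  by_cases hc : (g : Matrix (Fin 2) (Fin 2) F) 1 0 ≠ 0
  · exact SL2_mem_aux hTU hTL g hc
  push_neg at hc
  have hdet : (g : Matrix (Fin 2) (Fin 2) F) 0 0 * (g : Matrix (Fin 2) (Fin 2) F) 1 1 -
      (g : Matrix (Fin 2) (Fin 2) F) 0 1 * (g : Matrix (Fin 2) (Fin 2) F) 1 0 = 1 := by
    rw [← Matrix.det_fin_two]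
    exact g.2
  have ha : (g : Matrix (Fin 2) (Fin 2) F) 0 0 ≠ 0 := by
    intro h0
    rw [h0, hc] at hdet
    norm_num at hdet
  have h1g : TL 1 * g ∈ G := by
    apply SL2_mem_aux hTU hTL
    rw [Matrix.SpecialLinearGroup.coe_mul, TL_coe]
    rw [Matrix.mul_apply]
    simpa [Fin.sum_univ_two, hc] using ha
  have hgg : g = (TL 1)⁻¹ * (TL 1 * g) := by group
  rw [hgg]
  exact mul_mem (inv_mem (hTL 1)) h1g

end MooreAux

/-- Moore's presentation of `2·A₆ ≅ SL₂(9)`: in a field `F` with `9` elements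
containing `i` with `i² = −1`, the four matrices
`h₁ = [[0,1],[−1,−1]]`, `h₂ = [[0,−1],[1,−1]]`, `h₃ = [[−1,i],[i,0]]`,
`h₄ = [[−1,−i],[−i,0]]` of `SL₂(𝔽₉)` each have order `3`, all products
`(h_k·h_l)²` with `k ≠ l` equal the central involution `−1`, and the four
matrices generate all of `SL₂(𝔽₉)`. -/
theorem moore_relations_SL2_F9
    (F : Type*) [Field F] [Fintype F] (hF : Fintype.card F = 9)
    (i : F) (hi : i ^ 2 = -1)
    (h : Fin 4 → Matrix.SpecialLinearGroup (Fin 2) F)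
    (h1 : (h 0 : Matrix (Fin 2) (Fin 2) F) = !![0, 1; -1, -1])
    (h2 : (h 1 : Matrix (Fin 2) (Fin 2) F) = !![0, -1; 1, -1])
    (h3 : (h 2 : Matrix (Fin 2) (Fin 2) F) = !![-1, i; i, 0])
    (h4 : (h 3 : Matrix (Fin 2) (Fin 2) F) = !![-1, -i; -i, 0]) :
    (∀ k, orderOf (h k) = 3) ∧
    (∀ k l, k ≠ l →
      ((h k * h l) ^ 2 : Matrix.SpecialLinearGroup (Fin 2) F) =
        ((h 0 * h 1) ^ 2 : Matrix.SpecialLinearGroup (Fin 2) F)) ∧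
    (∀ k l, k ≠ l →
      (((h k * h l) ^ 2 : Matrix.SpecialLinearGroup (Fin 2) F) :
          Matrix (Fin 2) (Fin 2) F) = -1) ∧
    Subgroup.closure (Set.range h) = ⊤ := by
  have h3F : (3 : F) = 0 := three_eq_zero hF
  have hi0 : i ≠ 0 := by
    intro e
    rw [e] at hi
    norm_num at hi
  have pow3 : ∀ A : Matrix (Fin 2) (Fin 2) F, A ^ 3 = A * A * A := by
    intro A
    rw [show (3 : ℕ) = 2 + 1 from rfl, pow_succ, sq]
  -- cubes
  have hfin : ∀ k : Fin 4, k = 0 ∨ k = 1 ∨ k = 2 ∨ k = 3 := by decide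
  have hcube : ∀ k, (h k) ^ 3 = 1 := by
    intro k
    rcases hfin k with rfl | rfl | rfl | rfl <;>
      (apply Subtype.ext;
       rw [Matrix.SpecialLinearGroup.coe_pow, Matrix.SpecialLinearGroup.coe_one])
    · rw [h1, pow3, Matrix.one_fin_two]
      simp only [Matrix.mul_fin_two]
      exact mext _ _ _ _ _ _ _ _ (by ring) (by ring) (by ring) (by ring)
    · rw [h2, pow3, Matrix.one_fin_two]
      simp only [Matrix.mul_fin_two]
      exact mext _ _ _ _ _ _ _ _ (by ring) (by ring) (by ring) (by ring)
    · rw [h3, pow3, Matrix.one_fin_two]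
      simp only [Matrix.mul_fin_two]
      exact mext _ _ _ _ _ _ _ _ (by linear_combination ((-2 : F)) * hi)
        (by linear_combination ((1 : F) * i) * hi)
        (by linear_combination ((1 : F) * i) * hi)
        (by linear_combination ((-1 : F)) * hi)
    · rw [h4, pow3, Matrix.one_fin_two]
      simp only [Matrix.mul_fin_two]
      exact mext _ _ _ _ _ _ _ _ (by linear_combination ((-2 : F)) * hi)
        (by linear_combination ((-1 : F) * i) * hi)
        (by linear_combination ((-1 : F) * i) * hi)
        (by linear_combination ((-1 : F)) * hi)
  have hne : ∀ k, h k ≠ 1 := by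
    intro k
    rcases hfin k with rfl | rfl | rfl | rfl <;> intro e <;>
      (replace e : _ = (1 : Matrix (Fin 2) (Fin 2) F) := congrArg Subtype.val e)
    · rw [h1, Matrix.one_fin_two] at e
      have := congrFun (congrFun e 0) 1
      simp at this
    · rw [h2, Matrix.one_fin_two] at e
      have := congrFun (congrFun e 0) 1
      simp at this
    · rw [h3, Matrix.one_fin_two] at e
      have := congrFun (congrFun e 0) 1
      simp at this
      exact hi0 this
    · rw [h4, Matrix.one_fin_two] at e
      have := congrFun (congrFun e 0) 1
      simp at this
      exact hi0 this
  haveI : Fact (Nat.Prime 3) := ⟨Nat.prime_three⟩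
  have horder : ∀ k, orderOf (h k) = 3 := fun k => orderOf_eq_prime (hcube k) (hne k)
  -- squares of products equal -1
  have hpairs : ∀ k l, k ≠ l →
      (((h k * h l) ^ 2 : Matrix.SpecialLinearGroup (Fin 2) F) :
        Matrix (Fin 2) (Fin 2) F) = -1 := by
    intro k l hkl
    rcases hfin k with rfl | rfl | rfl | rfl <;> rcases hfin l with rfl | rfl | rfl | rfl <;>
      first
        | exact absurd rfl hkl
        | (rw [Matrix.SpecialLinearGroup.coe_pow, Matrix.SpecialLinearGroup.coe_mul, sq,
            mneg_one]
           first
            | (rw [h1, h2]; simp only [Matrix.mul_fin_two];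
               exact mext _ _ _ _ _ _ _ _ (by linear_combination ((1 : F)) * h3F)
                 (by linear_combination ((-1 : F)) * h3F)
                 (by linear_combination ((-1 : F)) * h3F)
                 (by linear_combination ((2 : F)) * h3F))
            | (rw [h1, h3]; simp only [Matrix.mul_fin_two];
               exact mext _ _ _ _ _ _ _ _ (by linear_combination ((1 : F)) * hi) (by ring)
                 (by ring) (by linear_combination ((1 : F)) * hi))
            | (rw [h1, h4]; simp only [Matrix.mul_fin_two];
               exact mext _ _ _ _ _ _ _ _ (by linear_combination ((1 : F)) * hi) (by ring)
                 (by ring) (by linear_combination ((1 : F)) * hi))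
            | (rw [h2, h1]; simp only [Matrix.mul_fin_two];
               exact mext _ _ _ _ _ _ _ _ (by linear_combination ((1 : F)) * h3F)
                 (by linear_combination ((1 : F)) * h3F)
                 (by linear_combination ((1 : F)) * h3F)
                 (by linear_combination ((2 : F)) * h3F))
            | (rw [h2, h3]; simp only [Matrix.mul_fin_two];
               exact mext _ _ _ _ _ _ _ _ (by linear_combination ((1 : F)) * hi) (by ring)
                 (by ring) (by linear_combination ((1 : F)) * hi))
            | (rw [h2, h4]; simp only [Matrix.mul_fin_two];
               exact mext _ _ _ _ _ _ _ _ (by linear_combination ((1 : F)) * hi) (by ring)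
                 (by ring) (by linear_combination ((1 : F)) * hi))
            | (rw [h3, h1]; simp only [Matrix.mul_fin_two];
               exact mext _ _ _ _ _ _ _ _ (by linear_combination ((1 : F)) * hi) (by ring)
                 (by ring) (by linear_combination ((1 : F)) * hi))
            | (rw [h3, h2]; simp only [Matrix.mul_fin_two];
               exact mext _ _ _ _ _ _ _ _ (by linear_combination ((1 : F)) * hi) (by ring)
                 (by ring) (by linear_combination ((1 : F)) * hi))
            | (rw [h3, h4]; simp only [Matrix.mul_fin_two];
               exact mext _ _ _ _ _ _ _ _
                 (by linear_combination ((1 : F) * i ^ 2 + (-4 : F)) * hi + ((2 : F)) * h3F)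
                 (by linear_combination ((-2 : F) * i) * hi + ((1 : F) * i) * h3F)
                 (by linear_combination ((2 : F) * i) * hi + ((-1 : F) * i) * h3F)
                 (by linear_combination ((1 : F) * i ^ 2 + (-2 : F)) * hi + ((1 : F)) * h3F))
            | (rw [h4, h1]; simp only [Matrix.mul_fin_two];
               exact mext _ _ _ _ _ _ _ _ (by linear_combination ((1 : F)) * hi) (by ring)
                 (by ring) (by linear_combination ((1 : F)) * hi))
            | (rw [h4, h2]; simp only [Matrix.mul_fin_two];
               exact mext _ _ _ _ _ _ _ _ (by linear_combination ((1 : F)) * hi) (by ring)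
                 (by ring) (by linear_combination ((1 : F)) * hi))
            | (rw [h4, h3]; simp only [Matrix.mul_fin_two];
               exact mext _ _ _ _ _ _ _ _
                 (by linear_combination ((1 : F) * i ^ 2 + (-4 : F)) * hi + ((2 : F)) * h3F)
                 (by linear_combination ((2 : F) * i) * hi + ((-1 : F) * i) * h3F)
                 (by linear_combination ((-2 : F) * i) * hi + ((1 : F) * i) * h3F)
                 (by linear_combination ((1 : F) * i ^ 2 + (-2 : F)) * hi + ((1 : F)) * h3F)))
  refine ⟨horder, ?_, hpairs, ?_⟩
  · intro k l hkl
    exact Subtype.ext (by rw [hpairs k l hkl, hpairs 0 1 (by decide)])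
  -- generation
  · set G := Subgroup.closure (Set.range h) with hG
    have hm : ∀ k, h k ∈ G := fun k => Subgroup.subset_closure ⟨k, rfl⟩
    have e1 : h 0 * TL (1 : F) = h 1 * h 0 := by
      apply Subtype.ext
      rw [Matrix.SpecialLinearGroup.coe_mul, Matrix.SpecialLinearGroup.coe_mul, TL_coe,
        h1, h2]
      simp only [Matrix.mul_fin_two]
      exact mext _ _ _ _ _ _ _ _ (by ring) (by ring)
        (by linear_combination ((-1 : F)) * h3F) (by linear_combination ((-1 : F)) * h3F)
    have e2 : TU (1 : F) * (h 0 * h 1) = h 0 := by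
      apply Subtype.ext
      rw [Matrix.SpecialLinearGroup.coe_mul, Matrix.SpecialLinearGroup.coe_mul, TU_coe,
        h1, h2]
      simp only [Matrix.mul_fin_two]
      exact mext _ _ _ _ _ _ _ _ (by ring) (by ring) (by ring)
        (by linear_combination ((1 : F)) * h3F)
    have e3 : (h 3 * h 2) * TU i = h 2 := by
      apply Subtype.ext
      rw [Matrix.SpecialLinearGroup.coe_mul, Matrix.SpecialLinearGroup.coe_mul, TU_coe,
        h3, h4]
      simp only [Matrix.mul_fin_two]
      exact mext _ _ _ _ _ _ _ _ (by linear_combination ((-1 : F)) * hi + ((1 : F)) * h3F)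
        (by linear_combination ((-1 : F) * i) * hi) (by ring) (by ring)
    have e4 : TL i * (h 2 * h 3) = h 2 := by
      apply Subtype.ext
      rw [Matrix.SpecialLinearGroup.coe_mul, Matrix.SpecialLinearGroup.coe_mul, TL_coe,
        h3, h4]
      simp only [Matrix.mul_fin_two]
      exact mext _ _ _ _ _ _ _ _ (by linear_combination ((-1 : F)) * hi + ((1 : F)) * h3F)
        (by ring) (by linear_combination ((-1 : F) * i) * hi) (by ring)
    have mTL1 : TL (1 : F) ∈ G := by
      have : TL (1 : F) = (h 0)⁻¹ * (h 1 * h 0) := eq_inv_mul_iff_mul_eq.mpr e1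
      rw [this]
      exact mul_mem (inv_mem (hm 0)) (mul_mem (hm 1) (hm 0))
    have mTU1 : TU (1 : F) ∈ G := by
      have : TU (1 : F) = h 0 * (h 0 * h 1)⁻¹ := eq_mul_inv_iff_mul_eq.mpr e2
      rw [this]
      exact mul_mem (hm 0) (inv_mem (mul_mem (hm 0) (hm 1)))
    have mTUi : TU i ∈ G := by
      have : TU i = (h 3 * h 2)⁻¹ * h 2 := eq_inv_mul_iff_mul_eq.mpr e3
      rw [this]
      exact mul_mem (inv_mem (mul_mem (hm 3) (hm 2))) (hm 2)
    have mTLi : TL i ∈ G := by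
      have : TL i = h 2 * (h 2 * h 3)⁻¹ := eq_mul_inv_iff_mul_eq.mpr e4
      rw [this]
      exact mul_mem (hm 2) (inv_mem (mul_mem (hm 2) (hm 3)))
    have hTU : ∀ t : F, TU t ∈ G := by
      intro t
      obtain ⟨a, b, rfl⟩ := decomp_F9 hF i hi t
      have : TU ((a : F) + (b : F) * i) = (TU (1 : F)) ^ a * (TU i) ^ b := by
        rw [TU_pow, TU_pow, TU_mul, mul_one]
      rw [this]
      exact mul_mem (pow_mem mTU1 a) (pow_mem mTUi b)
    have hTL : ∀ t : F, TL t ∈ G := by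
      intro t
      obtain ⟨a, b, rfl⟩ := decomp_F9 hF i hi t
      have : TL ((a : F) + (b : F) * i) = (TL (1 : F)) ^ a * (TL i) ^ b := by
        rw [TL_pow, TL_pow, TL_mul, mul_one]
      rw [this]
      exact mul_mem (pow_mem mTL1 a) (pow_mem mTLi b)
    rw [eq_top_iff]
    rintro g -
    exact SL2_mem_of_transvections hTU hTL g
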